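/- Let (W,w,𝓕) be a fusion frame system for H in which every local frame vector f_i^l is nonzero. Then the set {A ∈ 𝔏_{C_𝓕*T*_{W,w}} : max_{(i,l)} ‖A M_{(i,l)} C_𝓕* T*_{W,w}‖_F = min_{B ∈ 𝔏_{C_𝓕*T*_{W,w}}} max_{(i,l)} ‖B M_{(i,l)} C_𝓕* T*_{W,w}‖_F} is a non-empty, compact and convex subset of L(⊕_i 𝔽^{|L_i|}, H), where the maximum ranges over all pairs (i,l) with 1 ≤ i ≤ m and l ∈ L_i. -/

import Mathlib

noncomputable section

open scoped InnerProductSpace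

variable {𝕜 : Type} [RCLike 𝕜]
variable {H : Type} [NormedAddCommGroup H] [InnerProductSpace 𝕜 H] [FiniteDimensional 𝕜 H]
variable {m : ℕ}

/-- The Hilbert space `𝒲 = ⊕ᵢ Wᵢ` of a fusion sequence, with the ℓ² inner product. -/
abbrev FFSpace (W : Fin m → Submodule 𝕜 H) : Type := PiLp 2 (fun i => ↥(W i))

/-- The synthesis operator `T_{W,w} : 𝒲 → H`, `(fᵢ)ᵢ ↦ Σᵢ wᵢ fᵢ`. -/
def synthOp (W : Fin m → Submodule 𝕜 H) (w : Fin m → ℝ) : FFSpace W →ₗ[𝕜] H where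
  toFun f := ∑ i, (w i : 𝕜) • (f i : H)
  map_add' f g := by
    simp [Finset.sum_add_distrib, smul_add]
  map_smul' c f := by
    simp [Finset.smul_sum]
    congr 1; funext i; rw [smul_comm]

/-- The analysis operator `T*_{W,w} : H → 𝒲`, `f ↦ (wᵢ π_{Wᵢ} f)ᵢ`. -/
def analysisOp (W : Fin m → Submodule 𝕜 H) (w : Fin m → ℝ) : H →ₗ[𝕜] FFSpace W where
  toFun f := WithLp.toLp 2 (fun i => (w i : 𝕜) • ((W i).orthogonalProjectionOnto f))
  map_add' f g := by
    ext i; simp [smul_add]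
  map_smul' c f := by
    ext i; simp; rw [smul_comm]

/-- The coordinate operator `M_{J,W} : 𝒲 → 𝒲`, keeping the coordinates in `J`. -/
def MJ (W : Fin m → Submodule 𝕜 H) (J : Finset (Fin m)) : FFSpace W →ₗ[𝕜] FFSpace W where
  toFun f := WithLp.toLp 2 (fun j => if j ∈ J then f j else 0)
  map_add' f g := by
    ext j; by_cases h : j ∈ J <;> simp [h]
  map_smul' c f := by
    ext j; by_cases h : j ∈ J <;> simp [h]

/-- `Q : 𝒲 → 𝒱` is block-diagonal if `Q M_{j,W} 𝒲 ⊆ M_{j,V} 𝒱` for all `j`. -/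
def IsBlockDiagonal (W V : Fin m → Submodule 𝕜 H) (Q : FFSpace W →ₗ[𝕜] FFSpace V) : Prop :=
  ∀ j, LinearMap.range (Q ∘ₗ MJ W {j}) ≤ LinearMap.range (MJ V {j})

/-- `Q : 𝒲 → 𝒱` is component preserving if `Q M_{j,W} 𝒲 = M_{j,V} 𝒱` for all `j`. -/
def IsComponentPreserving (W V : Fin m → Submodule 𝕜 H) (Q : FFSpace W →ₗ[𝕜] FFSpace V) : Prop :=
  ∀ j, LinearMap.range (Q ∘ₗ MJ W {j}) = LinearMap.range (MJ V {j})

/-- The orthogonal projection onto `U` as an endomorphism of `H`. -/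
def projL (U : Submodule 𝕜 H) : H →ₗ[𝕜] H :=
  U.subtype ∘ₗ (U.orthogonalProjectionOnto : H →L[𝕜] U).toLinearMap

/-- The coefficient space `⊕ᵢ 𝔽^{Lᵢ}`. -/
abbrev CoefSpace (𝕜 : Type) [RCLike 𝕜] {m : ℕ} (L : Fin m → Type) [∀ i, Fintype (L i)] : Type :=
  PiLp 2 (fun i => EuclideanSpace 𝕜 (L i))

/-- The operator `C_𝓕 : ⊕ᵢ 𝔽^{Lᵢ} → 𝒲`, `((xᵢˡ)ₗ)ᵢ ↦ (Σₗ xᵢˡ fᵢˡ)ᵢ`, associated to a family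
of local frames `𝓕ᵢ = {fᵢˡ}ₗ ⊂ Wᵢ`. -/
def CFop (W : Fin m → Submodule 𝕜 H) (L : Fin m → Type) [∀ i, Fintype (L i)]
    (F : ∀ i, L i → ↥(W i)) : CoefSpace 𝕜 L →ₗ[𝕜] FFSpace W where
  toFun x := WithLp.toLp 2 (fun i => ∑ l, x i l • F i l)
  map_add' x y := by
    ext i
    simp [Finset.sum_add_distrib, add_smul]
  map_smul' c x := by
    ext i
    simp [Finset.smul_sum, smul_smul]

/-- The adjoint `C*_𝓕 : 𝒲 → ⊕ᵢ 𝔽^{Lᵢ}`, `(gᵢ)ᵢ ↦ ((⟨fᵢˡ, gᵢ⟩)ₗ)ᵢ` (inner products taken in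
Mathlib's convention, conjugate-linear in the first variable). -/
def CFadj (W : Fin m → Submodule 𝕜 H) (L : Fin m → Type) [∀ i, Fintype (L i)]
    (F : ∀ i, L i → ↥(W i)) : FFSpace W →ₗ[𝕜] CoefSpace 𝕜 L where
  toFun g := WithLp.toLp 2 (fun i => WithLp.toLp 2 (fun l => (inner 𝕜 (F i l) (g i) : 𝕜)))
  map_add' x y := by
    ext i l
    simp [inner_add_right]
  map_smul' c x := by
    ext i l
    simp [inner_smul_right]

/-- The coordinate operator `M_{(i₀,l₀)}` on `⊕ᵢ 𝔽^{Lᵢ}`, zeroing all coordinates except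
the `(i₀,l₀)`-th one. -/
def Mpair (L : Fin m → Type) [∀ i, Fintype (L i)] [∀ i, DecidableEq (L i)]
    (i₀ : Fin m) (l₀ : L i₀) : CoefSpace 𝕜 L →ₗ[𝕜] CoefSpace 𝕜 L where
  toFun x := WithLp.toLp 2
    (Pi.single i₀ (EuclideanSpace.single l₀ (x i₀ l₀)) : ∀ j, EuclideanSpace 𝕜 (L j))
  map_add' x y := by
    ext j l
    by_cases h : j = i₀
    · subst h
      by_cases h' : l = l₀ <;>
        simp [Pi.single_eq_same, EuclideanSpace.single_apply, h']
    · simp [Pi.single_eq_of_ne h]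
  map_smul' c x := by
    ext j l
    by_cases h : j = i₀
    · subst h
      by_cases h' : l = l₀ <;>
        simp [Pi.single_eq_same, EuclideanSpace.single_apply, h']
    · simp [Pi.single_eq_of_ne h]

/-- The squared Frobenius norm `‖B‖_F² = tr(B*B)` of a linear map between
finite-dimensional inner product spaces. -/
def frobSq {𝕜 : Type} [RCLike 𝕜] {E F : Type} [NormedAddCommGroup E] [InnerProductSpace 𝕜 E]
    [FiniteDimensional 𝕜 E] [NormedAddCommGroup F] [InnerProductSpace 𝕜 F]
    [FiniteDimensional 𝕜 F] (B : E →ₗ[𝕜] F) : ℝ :=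
  RCLike.re (LinearMap.trace 𝕜 E (LinearMap.adjoint B ∘ₗ B))

/-- The worst-case error `max_{(i,l)} ‖A M_{(i,l)} C*_𝓕 T*_{W,w}‖_F` for one erasure of a
local frame vector, for a reconstruction operator `A : ⊕ᵢ 𝔽^{Lᵢ} → H`. -/
def maxErrLoc (W : Fin m → Submodule 𝕜 H) (w : Fin m → ℝ) (L : Fin m → Type)
    [∀ i, Fintype (L i)] [∀ i, DecidableEq (L i)] (F : ∀ i, L i → ↥(W i))
    (A : CoefSpace 𝕜 L →L[𝕜] H) : ℝ :=
  ⨆ p : Σ i, L i, Real.sqrt (frobSq ((A : CoefSpace 𝕜 L →ₗ[𝕜] H) ∘ₗ Mpair L p.1 p.2 ∘ₗ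
    CFadj W L F ∘ₗ analysisOp W w))

/-- The set of left inverses of `C*_𝓕 T*_{W,w}` minimizing the worst-case one-erasure
error. -/
def optimalSetLoc (W : Fin m → Submodule 𝕜 H) (w : Fin m → ℝ) (L : Fin m → Type)
    [∀ i, Fintype (L i)] [∀ i, DecidableEq (L i)] (F : ∀ i, L i → ↥(W i)) :
    Set (CoefSpace 𝕜 L →L[𝕜] H) :=
  {A | A ∘L LinearMap.toContinuousLinearMap (CFadj W L F ∘ₗ analysisOp W w) =
      ContinuousLinearMap.id 𝕜 H ∧
    maxErrLoc W w L F A =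
      ⨅ B : {B : CoefSpace 𝕜 L →L[𝕜] H //
          B ∘L LinearMap.toContinuousLinearMap (CFadj W L F ∘ₗ analysisOp W w) =
            ContinuousLinearMap.id 𝕜 H},
        maxErrLoc W w L F ↑B}


section RankOneAux
variable {𝕜 : Type} [RCLike 𝕜]

/-- The rank-one map `x ↦ ⟪u, x⟫ • v`. -/
def rkOne {E E' : Type} [NormedAddCommGroup E] [InnerProductSpace 𝕜 E]
    [NormedAddCommGroup E'] [InnerProductSpace 𝕜 E'] (u : E) (v : E') : E →ₗ[𝕜] E' :=
  LinearMap.smulRight ((innerSL 𝕜 u : E →L[𝕜] 𝕜) : E →ₗ[𝕜] 𝕜) v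

lemma rkOne_apply {E E' : Type} [NormedAddCommGroup E] [InnerProductSpace 𝕜 E]
    [NormedAddCommGroup E'] [InnerProductSpace 𝕜 E'] (u : E) (v : E') (x : E) :
    rkOne (𝕜 := 𝕜) u v x = (inner 𝕜 u x : 𝕜) • v := rfl

lemma rkOne_adjoint {E E' : Type} [NormedAddCommGroup E] [InnerProductSpace 𝕜 E]
    [FiniteDimensional 𝕜 E] [NormedAddCommGroup E'] [InnerProductSpace 𝕜 E']
    [FiniteDimensional 𝕜 E'] (u : E) (v : E') :
    LinearMap.adjoint (rkOne (𝕜 := 𝕜) u v) = rkOne v u := by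
  symm
  rw [LinearMap.eq_adjoint_iff]
  intro x y
  simp only [rkOne_apply, inner_smul_left, inner_smul_right, inner_conj_symm]
  ring

lemma trace_rkOne {E : Type} [NormedAddCommGroup E] [InnerProductSpace 𝕜 E]
    [FiniteDimensional 𝕜 E] (u z : E) :
    LinearMap.trace 𝕜 E (rkOne (𝕜 := 𝕜) u z) = (inner 𝕜 u z : 𝕜) := by
  have h : rkOne (𝕜 := 𝕜) u z
      = (LinearMap.toSpanSingleton 𝕜 E z) ∘ₗ ((innerSL 𝕜 u : E →L[𝕜] 𝕜) : E →ₗ[𝕜] 𝕜) := by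
    ext x
    simp [rkOne_apply, LinearMap.toSpanSingleton_apply]
  rw [h, LinearMap.trace_comp_comm']
  have h2 : (((innerSL 𝕜 u : E →L[𝕜] 𝕜) : E →ₗ[𝕜] 𝕜) ∘ₗ LinearMap.toSpanSingleton 𝕜 E z)
      = (inner 𝕜 u z : 𝕜) • LinearMap.id := by
    ext
    simp [LinearMap.toSpanSingleton_apply, inner_smul_right, mul_comm]
  rw [h2, map_smul, LinearMap.trace_id, Module.finrank_self]
  simp

lemma frobSq_rkOne {E E' : Type} [NormedAddCommGroup E] [InnerProductSpace 𝕜 E]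
    [FiniteDimensional 𝕜 E] [NormedAddCommGroup E'] [InnerProductSpace 𝕜 E']
    [FiniteDimensional 𝕜 E'] (u : E) (v : E') :
    frobSq (rkOne (𝕜 := 𝕜) u v) = ‖u‖ ^ 2 * ‖v‖ ^ 2 := by
  unfold frobSq
  rw [rkOne_adjoint]
  have hcomp : rkOne (𝕜 := 𝕜) v u ∘ₗ rkOne u v = rkOne u ((inner 𝕜 v v : 𝕜) • u) := by
    ext x
    simp only [LinearMap.comp_apply, rkOne_apply, map_smul, inner_smul_right, smul_smul]
  rw [hcomp, trace_rkOne, inner_smul_right, inner_self_eq_norm_sq_to_K,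
    inner_self_eq_norm_sq_to_K]
  rw [← RCLike.ofReal_pow, ← RCLike.ofReal_pow, ← RCLike.ofReal_mul, RCLike.ofReal_re]
  ring

lemma sqrt_frobSq_rkOne {E E' : Type} [NormedAddCommGroup E] [InnerProductSpace 𝕜 E]
    [FiniteDimensional 𝕜 E] [NormedAddCommGroup E'] [InnerProductSpace 𝕜 E']
    [FiniteDimensional 𝕜 E'] (u : E) (v : E') :
    Real.sqrt (frobSq (rkOne (𝕜 := 𝕜) u v)) = ‖u‖ * ‖v‖ := by
  rw [frobSq_rkOne, Real.sqrt_mul (sq_nonneg _), Real.sqrt_sq (norm_nonneg _),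
    Real.sqrt_sq (norm_nonneg _)]

end RankOneAux

section EBAux
variable (𝕜 : Type) [RCLike 𝕜] {m : ℕ} (L : Fin m → Type) [∀ i, Fintype (L i)]
  [∀ i, DecidableEq (L i)]

set_option linter.unusedSectionVars false

/-- The standard basis vector of the coefficient space. -/
def eb (p : Σ i, L i) : CoefSpace 𝕜 L :=
  WithLp.toLp 2 (Pi.single p.1 (EuclideanSpace.single p.2 (1 : 𝕜)) : ∀ j, EuclideanSpace 𝕜 (L j))

lemma single_eq_smul_eb (p : Σ i, L i) (c : 𝕜) :
    WithLp.toLp 2 (Pi.single p.1 (EuclideanSpace.single p.2 c) : ∀ j, EuclideanSpace 𝕜 (L j))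
      = (c • eb 𝕜 L p : CoefSpace 𝕜 L) := by
  ext j l
  by_cases hj : j = p.1
  · subst hj
    by_cases hl : l = p.2 <;>
      simp [eb, EuclideanSpace.single_apply, hl, PiLp.smul_apply, Pi.single_eq_same]
  · simp [eb, Pi.single_eq_of_ne hj, PiLp.smul_apply]

lemma eb_expand (x : CoefSpace 𝕜 L) : x = ∑ p : Σ i, L i, x p.1 p.2 • eb 𝕜 L p := by
  ext j l
  rw [WithLp.ofLp_sum, Finset.sum_apply, WithLp.ofLp_sum, Finset.sum_apply]
  rw [← Finset.univ_sigma_univ, Finset.sum_sigma]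
  rw [Finset.sum_eq_single j]
  · rw [Finset.sum_eq_single l]
    · simp [eb, Pi.single_eq_same, EuclideanSpace.single_apply, PiLp.smul_apply]
    · intro l' _ hl'
      simp [eb, Pi.single_eq_same, EuclideanSpace.single_apply, PiLp.smul_apply,
        Ne.symm hl']
    · intro h; exact absurd (Finset.mem_univ l) h
  · intro j' _ hj'
    apply Finset.sum_eq_zero
    intro l' _
    simp [eb, Pi.single_eq_of_ne (Ne.symm hj'), PiLp.smul_apply]
  · intro h; exact absurd (Finset.mem_univ j) h

lemma coord_le_norm (x : CoefSpace 𝕜 L) (p : Σ i, L i) : ‖x p.1 p.2‖ ≤ ‖x‖ := by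
  have key : ∀ {ι : Type} [Fintype ι] (V : ι → Type) [∀ i, NormedAddCommGroup (V i)]
      (y : PiLp 2 V) (i : ι), ‖y i‖ ≤ ‖y‖ := by
    intro ι _ V _ y i
    rw [← pow_le_pow_iff_left₀ (norm_nonneg _) (norm_nonneg _) (two_ne_zero),
      PiLp.norm_sq_eq_of_L2]
    exact Finset.single_le_sum (f := fun j => ‖y j‖ ^ 2) (fun l _ => sq_nonneg _)
      (Finset.mem_univ i)
  exact (key (fun _ : L p.1 => 𝕜) (x p.1) p.2).trans (key _ x p.1)

end EBAux

section FusionAux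
variable {𝕜 : Type} [RCLike 𝕜] {H : Type} [NormedAddCommGroup H] [InnerProductSpace 𝕜 H]
  [FiniteDimensional 𝕜 H] {m : ℕ}
  (W : Fin m → Submodule 𝕜 H) (w : Fin m → ℝ)
  (L : Fin m → Type) [∀ i, Fintype (L i)] [∀ i, DecidableEq (L i)]
  (F : ∀ i, L i → ↥(W i))

set_option linter.unusedSectionVars false

/-- The vector `u_p = w_{p.1} • f_{p.1}^{p.2}`. -/
def uvec (p : Σ i, L i) : H := ((w p.1 : ℝ) : 𝕜) • ((F p.1 p.2 : H))

lemma CA_apply (x : H) (i : Fin m) (l : L i) :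
    (CFadj W L F ∘ₗ analysisOp W w) x i l
      = ((w i : ℝ) : 𝕜) * (inner 𝕜 ((F i l : H)) x : 𝕜) := by
  show (inner 𝕜 (F i l) (((w i : ℝ) : 𝕜) • ((W i).orthogonalProjectionOnto x)) : 𝕜) = _
  rw [inner_smul_right, Submodule.inner_orthogonalProjectionOnto_eq_of_mem_left]

lemma comp_eq_rkOne (A : CoefSpace 𝕜 L →L[𝕜] H) (p : Σ i, L i) :
    (A : CoefSpace 𝕜 L →ₗ[𝕜] H) ∘ₗ Mpair L p.1 p.2 ∘ₗ CFadj W L F ∘ₗ analysisOp W w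
      = rkOne (uvec W w L F p) (A (eb 𝕜 L p)) := by
  apply LinearMap.ext
  intro x
  have hM : Mpair L p.1 p.2 ((CFadj W L F ∘ₗ analysisOp W w) x)
      = ((((w p.1 : ℝ) : 𝕜) * (inner 𝕜 ((F p.1 p.2 : H)) x : 𝕜)) • eb 𝕜 L p :
          CoefSpace 𝕜 L) := by
    rw [← CA_apply W w L F x p.1 p.2, ← single_eq_smul_eb]
    rfl
  show A (Mpair L p.1 p.2 ((CFadj W L F ∘ₗ analysisOp W w) x)) = _
  rw [hM, map_smul, rkOne_apply]
  unfold uvec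
  rw [inner_smul_left, RCLike.conj_ofReal]

lemma sqrt_term_eq (A : CoefSpace 𝕜 L →L[𝕜] H) (p : Σ i, L i) :
    Real.sqrt (frobSq ((A : CoefSpace 𝕜 L →ₗ[𝕜] H) ∘ₗ Mpair L p.1 p.2 ∘ₗ
      CFadj W L F ∘ₗ analysisOp W w)) = ‖uvec W w L F p‖ * ‖A (eb 𝕜 L p)‖ := by
  rw [comp_eq_rkOne, sqrt_frobSq_rkOne]

lemma maxErrLoc_eq (A : CoefSpace 𝕜 L →L[𝕜] H) :
    maxErrLoc W w L F A = ⨆ p : Σ i, L i, ‖uvec W w L F p‖ * ‖A (eb 𝕜 L p)‖ :=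
  iSup_congr fun p => sqrt_term_eq W w L F A p

lemma CA_ker (hw : ∀ i, 0 < w i) (hW : ⨆ i, W i = ⊤)
    (hF : ∀ i, Submodule.span 𝕜 (Set.range (F i)) = ⊤) :
    LinearMap.ker (CFadj W L F ∘ₗ analysisOp W w) = ⊥ := by
  rw [LinearMap.ker_eq_bot']
  intro x hx
  have hx' : ∀ (i : Fin m) (l : L i), (inner 𝕜 ((F i l : H)) x : 𝕜) = 0 := by
    intro i l
    have h0 : (CFadj W L F ∘ₗ analysisOp W w) x i l = 0 := by rw [hx]; rfl
    rw [CA_apply] at h0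
    rcases mul_eq_zero.1 h0 with h | h
    · exact absurd h (by simp [RCLike.ofReal_eq_zero]; exact (hw i).ne')
    · exact h
  have horth : ∀ i, x ∈ (W i)ᗮ := by
    intro i
    rw [Submodule.mem_orthogonal]
    intro u hu
    have hmem : (⟨u, hu⟩ : ↥(W i)) ∈ Submodule.span 𝕜 (Set.range (F i)) := by
      rw [hF]; trivial
    have : ∀ y ∈ Submodule.span 𝕜 (Set.range (F i)), (inner 𝕜 ((y : ↥(W i)) : H) x : 𝕜) = 0 := by
      intro y hy
      refine Submodule.span_induction ?_ ?_ ?_ ?_ hy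
      · rintro z ⟨l, rfl⟩; exact hx' i l
      · simp
      · intro a b _ _ ha hb
        rw [Submodule.coe_add, inner_add_left, ha, hb, add_zero]
      · intro c a _ ha
        rw [Submodule.coe_smul, inner_smul_left, ha, mul_zero]
    exact this _ hmem
  have hxtop : x ∈ (⊤ : Submodule 𝕜 H)ᗮ := by
    rw [← hW, Submodule.mem_orthogonal]
    intro u hu
    refine Submodule.iSup_induction (motive := fun u => (inner 𝕜 u x : 𝕜) = 0) _ hu ?_ ?_ ?_
    · intro i y hy
      exact (Submodule.mem_orthogonal _ _).1 (horth i) y hy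
    · simp
    · intro a b ha hb
      rw [inner_add_left, ha, hb, add_zero]
  rw [Submodule.top_orthogonal_eq_bot] at hxtop
  simpa using hxtop

lemma exists_leftInv (hker : LinearMap.ker (CFadj W L F ∘ₗ analysisOp W w) = ⊥) :
    ∃ A : CoefSpace 𝕜 L →L[𝕜] H,
      A ∘L LinearMap.toContinuousLinearMap (CFadj W L F ∘ₗ analysisOp W w) =
        ContinuousLinearMap.id 𝕜 H := by
  obtain ⟨g, hg⟩ := (CFadj W L F ∘ₗ analysisOp W w).exists_leftInverse_of_injective hker
  refine ⟨LinearMap.toContinuousLinearMap g, ?_⟩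
  ext x
  have := LinearMap.ext_iff.1 hg x
  simpa using this

lemma opNorm_le_of_forall_eb (A : CoefSpace 𝕜 L →L[𝕜] H) (r : ℝ) (hr : 0 ≤ r)
    (h : ∀ p : Σ i, L i, ‖A (eb 𝕜 L p)‖ ≤ r) :
    ‖A‖ ≤ (Fintype.card (Σ i, L i) : ℝ) * r := by
  refine ContinuousLinearMap.opNorm_le_bound _ (by positivity) fun x => ?_
  have hx : A x = ∑ p : Σ i, L i, x p.1 p.2 • A (eb 𝕜 L p) := by
    conv_lhs => rw [eb_expand 𝕜 L x]
    rw [map_sum]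
    simp only [map_smul]
  rw [hx]
  calc ‖∑ p : Σ i, L i, x p.1 p.2 • A (eb 𝕜 L p)‖
      ≤ ∑ p : Σ i, L i, ‖x p.1 p.2 • A (eb 𝕜 L p)‖ := norm_sum_le _ _
    _ ≤ ∑ _p : Σ i, L i, ‖x‖ * r := by
        refine Finset.sum_le_sum fun p _ => ?_
        rw [norm_smul]
        exact mul_le_mul (coord_le_norm 𝕜 L x p) (h p) (norm_nonneg _) (norm_nonneg _)
    _ = (Fintype.card (Σ i, L i) : ℝ) * r * ‖x‖ := by
        rw [Finset.sum_const, Finset.card_univ, nsmul_eq_mul]; ring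

end FusionAux

set_option maxHeartbeats 1000000 in
/-- for a fusion frame system `(W,w,𝓕)` with nonzero local frame vectors,
the set of left inverses of `C*_𝓕 T*_{W,w}` minimizing the worst-case one-erasure error
is non-empty, compact and convex (convexity for real coefficients, acting through `𝕜`). -/
theorem optimalSetLoc_nonempty_compact_convex
    {𝕜 : Type} [RCLike 𝕜] {H : Type} [NormedAddCommGroup H] [InnerProductSpace 𝕜 H]
    [FiniteDimensional 𝕜 H] {m : ℕ}
    (W : Fin m → Submodule 𝕜 H) (w : Fin m → ℝ) (hw : ∀ i, 0 < w i) (hW : ⨆ i, W i = ⊤)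
    (L : Fin m → Type) [∀ i, Fintype (L i)] [∀ i, DecidableEq (L i)]
    (F : ∀ i, L i → ↥(W i))
    (hF : ∀ i, Submodule.span 𝕜 (Set.range (F i)) = ⊤)
    (hne : ∀ i l, F i l ≠ 0) :
    (optimalSetLoc W w L F).Nonempty ∧ IsCompact (optimalSetLoc W w L F) ∧
    (∀ A ∈ optimalSetLoc W w L F, ∀ B ∈ optimalSetLoc W w L F, ∀ t : ℝ, 0 ≤ t → t ≤ 1 →
      ((t : 𝕜) • A + ((1 - t : ℝ) : 𝕜) • B) ∈ optimalSetLoc W w L F) := by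
  classical
  set f := maxErrLoc W w L F with hfdef
  set Cc := LinearMap.toContinuousLinearMap (CFadj W L F ∘ₗ analysisOp W w) with hCcdef
  have hfor : ∀ A : CoefSpace 𝕜 L →L[𝕜] H,
      f A = ⨆ p : Σ i, L i, ‖uvec W w L F p‖ * ‖A (eb 𝕜 L p)‖ :=
    fun A => maxErrLoc_eq W w L F A
  have hbddA : ∀ A : CoefSpace 𝕜 L →L[𝕜] H,
      BddAbove (Set.range fun p : Σ i, L i => ‖uvec W w L F p‖ * ‖A (eb 𝕜 L p)‖) :=
    fun A => (Set.finite_range _).bddAbove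
  have hterm : ∀ (A : CoefSpace 𝕜 L →L[𝕜] H) (p : Σ i, L i),
      ‖uvec W w L F p‖ * ‖A (eb 𝕜 L p)‖ ≤ f A := by
    intro A p; rw [hfor]; exact le_ciSup (hbddA A) p
  have hf0 : ∀ A, 0 ≤ f A := by
    intro A; rw [hfor]; exact Real.iSup_nonneg fun p => by positivity
  have hupos : ∀ p : Σ i, L i, 0 < ‖uvec W w L F p‖ := by
    intro p
    rw [norm_pos_iff]
    unfold uvec
    refine smul_ne_zero ?_ ?_
    · exact_mod_cast (hw p.1).ne'
    · exact fun h => hne p.1 p.2 (by exact_mod_cast h)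
  -- Lipschitz continuity of the worst-case error
  set Kc : ℝ := ∑ p : Σ i, L i, ‖uvec W w L F p‖ * ‖eb 𝕜 L p‖ with hKcdef
  have hKc0 : 0 ≤ Kc := Finset.sum_nonneg fun p _ => by positivity
  have hlip : ∀ A B : CoefSpace 𝕜 L →L[𝕜] H, f A ≤ f B + Kc * ‖A - B‖ := by
    intro A B
    rw [hfor A]
    refine Real.iSup_le (fun p => ?_)
      (add_nonneg (hf0 B) (mul_nonneg hKc0 (norm_nonneg _)))
    have h1 : ‖A (eb 𝕜 L p)‖ ≤ ‖B (eb 𝕜 L p)‖ + ‖A - B‖ * ‖eb 𝕜 L p‖ := by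
      have h2 : A (eb 𝕜 L p) = B (eb 𝕜 L p) + (A - B) (eb 𝕜 L p) := by simp
      rw [h2]
      exact (norm_add_le _ _).trans (by gcongr; exact (A - B).le_opNorm _)
    have h3 : ‖uvec W w L F p‖ * ‖eb 𝕜 L p‖ ≤ Kc :=
      Finset.single_le_sum (f := fun q => ‖uvec W w L F q‖ * ‖eb 𝕜 L q‖)
        (fun q _ => by positivity) (Finset.mem_univ p)
    have h4 := hterm B p
    have h5 : (0:ℝ) ≤ ‖uvec W w L F p‖ := norm_nonneg _
    nlinarith [mul_le_mul_of_nonneg_left h1 h5,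
      mul_le_mul_of_nonneg_right h3 (norm_nonneg (A - B))]
  have fcont : Continuous f := by
    have hl : LipschitzWith (Real.toNNReal Kc) f := by
      apply LipschitzWith.of_dist_le_mul
      intro A B
      rw [Real.dist_eq, dist_eq_norm, Real.coe_toNNReal Kc hKc0, abs_sub_le_iff]
      constructor
      · have := hlip A B; linarith
      · have := hlip B A; rw [norm_sub_rev] at this; linarith
    exact hl.continuous
  -- a left inverse exists
  obtain ⟨A₀, hA₀⟩ := exists_leftInv W w L F (CA_ker W w L F hw hW hF)
  haveI hSne : Nonempty {B : CoefSpace 𝕜 L →L[𝕜] H //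
      B ∘L Cc = ContinuousLinearMap.id 𝕜 H} := ⟨⟨A₀, hA₀⟩⟩
  set μ := ⨅ B : {B : CoefSpace 𝕜 L →L[𝕜] H //
      B ∘L Cc = ContinuousLinearMap.id 𝕜 H}, f ↑B with hμdef
  have hmem : ∀ A : CoefSpace 𝕜 L →L[𝕜] H,
      A ∈ optimalSetLoc W w L F ↔
        (A ∘L Cc = ContinuousLinearMap.id 𝕜 H ∧ f A = μ) := fun A => Iff.rfl
  have hbb : BddBelow (Set.range fun B : {B : CoefSpace 𝕜 L →L[𝕜] H //
      B ∘L Cc = ContinuousLinearMap.id 𝕜 H} => f ↑B) := by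
    refine ⟨0, ?_⟩; rintro y ⟨B, rfl⟩; exact hf0 _
  have hμle : ∀ A : CoefSpace 𝕜 L →L[𝕜] H,
      A ∘L Cc = ContinuousLinearMap.id 𝕜 H → μ ≤ f A := fun A hA => ciInf_le hbb ⟨A, hA⟩
  have hμ0 : 0 ≤ μ := le_ciInf fun B => hf0 _
  -- the constraint set is closed
  have hΨcont : Continuous fun A : CoefSpace 𝕜 L →L[𝕜] H => A ∘L Cc := by
    let Ψ : (CoefSpace 𝕜 L →L[𝕜] H) →ₗ[𝕜] (H →L[𝕜] H) :=
      { toFun := fun A => A ∘L Cc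
        map_add' := fun a b => by ext x; simp
        map_smul' := fun c a => by ext x; simp }
    exact Ψ.continuous_of_finiteDimensional
  have hSclosed : IsClosed {A : CoefSpace 𝕜 L →L[𝕜] H |
      A ∘L Cc = ContinuousLinearMap.id 𝕜 H} := isClosed_eq hΨcont continuous_const
  haveI := FiniteDimensional.proper_rclike 𝕜 (CoefSpace 𝕜 L →L[𝕜] H)
  -- sublevel sets are bounded
  have hsub : ∀ c : ℝ, 0 ≤ c → ∀ A : CoefSpace 𝕜 L →L[𝕜] H, f A ≤ c →
      ‖A‖ ≤ (Fintype.card (Σ i, L i) : ℝ) *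
        (c * ∑ p : Σ i, L i, ‖uvec W w L F p‖⁻¹) := by
    intro c hc A hA
    refine opNorm_le_of_forall_eb L A (c * ∑ p : Σ i, L i, ‖uvec W w L F p‖⁻¹) ?_ ?_
    · have : (0:ℝ) ≤ ∑ p : Σ i, L i, ‖uvec W w L F p‖⁻¹ :=
        Finset.sum_nonneg fun q _ => by positivity
      positivity
    · intro p
      have h1 : ‖uvec W w L F p‖ * ‖A (eb 𝕜 L p)‖ ≤ c := (hterm A p).trans hA
      have h2 : ‖A (eb 𝕜 L p)‖ ≤ c / ‖uvec W w L F p‖ := by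
        rw [le_div_iff₀ (hupos p)]
        rw [mul_comm] at h1; exact h1
      refine h2.trans ?_
      rw [div_eq_mul_inv]
      refine mul_le_mul_of_nonneg_left ?_ hc
      exact Finset.single_le_sum (f := fun q => ‖uvec W w L F q‖⁻¹)
        (fun q _ => by positivity) (Finset.mem_univ p)
  -- the minimum is attained
  set Kset : Set (CoefSpace 𝕜 L →L[𝕜] H) :=
    {A | A ∘L Cc = ContinuousLinearMap.id 𝕜 H} ∩ {A | f A ≤ f A₀} with hKset
  have hKclosed : IsClosed Kset := hSclosed.inter (isClosed_le fcont continuous_const)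
  have hKcompact : IsCompact Kset := by
    refine (isCompact_closedBall (0 : CoefSpace 𝕜 L →L[𝕜] H)
      ((Fintype.card (Σ i, L i) : ℝ) *
        (f A₀ * ∑ p : Σ i, L i, ‖uvec W w L F p‖⁻¹))).of_isClosed_subset hKclosed ?_
    intro A hA
    rw [Metric.mem_closedBall, dist_zero_right]
    exact hsub (f A₀) (hf0 A₀) A hA.2
  have hKne : Kset.Nonempty := ⟨A₀, hA₀, show f A₀ ≤ f A₀ from le_refl _⟩
  obtain ⟨Am, hAmK, hAmin⟩ := hKcompact.exists_isMinOn hKne fcont.continuousOn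
  have hAmS : Am ∘L Cc = ContinuousLinearMap.id 𝕜 H := hAmK.1
  have hfAm : f Am = μ := by
    refine le_antisymm ?_ (hμle Am hAmS)
    refine le_ciInf fun B => ?_
    rcases le_or_gt (f ↑B) (f A₀) with h | h
    · exact isMinOn_iff.1 hAmin ↑B ⟨B.2, h⟩
    · exact le_trans hAmK.2 h.le
  have hOeq : optimalSetLoc W w L F =
      {A : CoefSpace 𝕜 L →L[𝕜] H | A ∘L Cc = ContinuousLinearMap.id 𝕜 H} ∩
        {A | f A = μ} := by
    ext A
    simpa [Set.mem_inter_iff, Set.mem_setOf_eq] using hmem A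
  refine ⟨⟨Am, (hmem Am).2 ⟨hAmS, hfAm⟩⟩, ?_, ?_⟩
  · -- compactness
    have hOclosed : IsClosed (optimalSetLoc W w L F) := by
      rw [hOeq]; exact hSclosed.inter (isClosed_eq fcont continuous_const)
    refine (isCompact_closedBall (0 : CoefSpace 𝕜 L →L[𝕜] H)
      ((Fintype.card (Σ i, L i) : ℝ) *
        (μ * ∑ p : Σ i, L i, ‖uvec W w L F p‖⁻¹))).of_isClosed_subset hOclosed ?_
    intro A hA
    rw [Metric.mem_closedBall, dist_zero_right]
    exact hsub μ hμ0 A ((hmem A).1 hA).2.le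
  · -- convexity
    intro A hA B hB t ht0 ht1
    obtain ⟨hAS, hAμ⟩ := (hmem A).1 hA
    obtain ⟨hBS, hBμ⟩ := (hmem B).1 hB
    have h1t0 : (0:ℝ) ≤ 1 - t := by linarith
    have hcast : ((t : ℝ) : 𝕜) + ((1 - t : ℝ) : 𝕜) = 1 := by push_cast; ring
    have hCtS : ((t : 𝕜) • A + ((1 - t : ℝ) : 𝕜) • B) ∘L Cc =
        ContinuousLinearMap.id 𝕜 H := by
      rw [ContinuousLinearMap.add_comp, ContinuousLinearMap.smul_comp,
        ContinuousLinearMap.smul_comp, hAS, hBS]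
      ext x
      simp only [ContinuousLinearMap.add_apply, ContinuousLinearMap.smul_apply,
        ContinuousLinearMap.coe_id', id_eq]
      rw [← add_smul, hcast, one_smul]
    refine (hmem _).2 ⟨hCtS, ?_⟩
    refine le_antisymm ?_ (hμle _ hCtS)
    rw [hfor]
    refine Real.iSup_le (fun p => ?_) hμ0
    have hA1 := hterm A p; rw [hAμ] at hA1
    have hB1 := hterm B p; rw [hBμ] at hB1
    have happ : ((t : 𝕜) • A + ((1 - t : ℝ) : 𝕜) • B) (eb 𝕜 L p)
        = (t : 𝕜) • A (eb 𝕜 L p) + ((1 - t : ℝ) : 𝕜) • B (eb 𝕜 L p) := rfl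
    have hnorm : ‖((t : 𝕜) • A + ((1 - t : ℝ) : 𝕜) • B) (eb 𝕜 L p)‖
        ≤ t * ‖A (eb 𝕜 L p)‖ + (1 - t) * ‖B (eb 𝕜 L p)‖ := by
      rw [happ]
      refine (norm_add_le _ _).trans ?_
      rw [norm_smul, norm_smul, RCLike.norm_ofReal, RCLike.norm_ofReal,
        abs_of_nonneg ht0, abs_of_nonneg h1t0]
    have hu := (hupos p).le
    nlinarith [mul_le_mul_of_nonneg_left hnorm hu,
      mul_le_mul_of_nonneg_left hA1 ht0, mul_le_mul_of_nonneg_left hB1 h1t0]
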